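/- Fix α > 0 and an integer p ≥ 2. For a phase parameter 0 < μ < π let φ^{(μ)} be the cardinal trigonometric GB-splines with phase μ, and let φ be the polynomial cardinal B-splines; define f_p^{T_μ}(θ) := −(φ^{(μ)})̈ p ((p+1)/2) − 2·Σ_{k=1}^{⌊p/2⌋} (φ^{(μ)})̈ p ((p+1)/2 − k)·cos(kθ) and f_p(θ) := −φ̈ p ((p+1)/2) − 2·Σ_{k=1}^{⌊p/2⌋} φ̈ p ((p+1)/2 − k)·cos(kθ), where ·̈ denotes the second derivative in the argument t. Then there exist a constant C > 0 and an integer N (with N large enough that α/n < π for n ≥ N) such that for all n ≥ N: ∫_{−π}^{π} |f_p^{T_{α/n}}(θ) − f_p(θ)| dθ ≤ C · n^{−2}. -/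

import Mathlib

open Real MeasureTheory

private lemma primitive_hasDerivAt {h : ℝ → ℝ} (hc : Continuous h) (t : ℝ) :
    HasDerivAt (fun x => ∫ s in (0:ℝ)..x, h s) (h t) t :=
  intervalIntegral.integral_hasDerivAt_right (hc.intervalIntegrable _ _)
    hc.stronglyMeasurable.stronglyMeasurableAtFilter hc.continuousAt

private lemma fam_cont (F : ℕ → ℝ → ℝ) (h1 : Continuous (F 1))
    (hrec : ∀ q : ℕ, 2 ≤ q → ∀ t : ℝ,
      F q t = ∫ s in (0:ℝ)..t, (F (q - 1) s - F (q - 1) (s - 1))) :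
    ∀ q, 1 ≤ q → Continuous (F q) := by
  intro q hq
  induction q, hq using Nat.le_induction with
  | base => exact h1
  | succ q hq ih =>
    have hc : Continuous (fun s => F q s - F q (s - 1)) :=
      ih.sub (ih.comp (continuous_id.sub continuous_const))
    have he : F (q + 1) = fun x => ∫ s in (0:ℝ)..x, (F q s - F q (s - 1)) := by
      funext t
      simpa using hrec (q + 1) (by omega) t
    rw [he]
    exact continuous_iff_continuousAt.2 fun t => (primitive_hasDerivAt hc t).continuousAt

private lemma fam_hasDerivAt (F : ℕ → ℝ → ℝ) (h1 : Continuous (F 1))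
    (hrec : ∀ q : ℕ, 2 ≤ q → ∀ t : ℝ,
      F q t = ∫ s in (0:ℝ)..t, (F (q - 1) s - F (q - 1) (s - 1))) :
    ∀ q, 2 ≤ q → ∀ t, HasDerivAt (F q) (F (q - 1) t - F (q - 1) (t - 1)) t := by
  intro q hq t
  have hc : Continuous (fun s => F (q - 1) s - F (q - 1) (s - 1)) := by
    have := fam_cont F h1 hrec (q - 1) (by omega)
    exact this.sub (this.comp (continuous_id.sub continuous_const))
  have he : F q = fun x => ∫ s in (0:ℝ)..x, (F (q - 1) s - F (q - 1) (s - 1)) :=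
    funext (hrec q hq)
  rw [he]
  exact primitive_hasDerivAt hc t


private lemma fam_deriv2 (F : ℕ → ℝ → ℝ) (h1 : Continuous (F 1))
    (hrec : ∀ q : ℕ, 2 ≤ q → ∀ t : ℝ,
      F q t = ∫ s in (0:ℝ)..t, (F (q - 1) s - F (q - 1) (s - 1))) :
    ∀ q, 3 ≤ q → ∀ t, deriv (deriv (F q)) t =
      (F (q - 2) t - F (q - 2) (t - 1)) - (F (q - 2) (t - 1) - F (q - 2) (t - 2)) := by
  intro q hq t
  have hd1 : deriv (F q) = fun x => F (q - 1) x - F (q - 1) (x - 1) :=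
    funext fun x => (fam_hasDerivAt F h1 hrec q (by omega) x).deriv
  rw [hd1]
  have e : q - 1 - 1 = q - 2 := by omega
  have hA : HasDerivAt (F (q - 1)) (F (q - 2) t - F (q - 2) (t - 1)) t := by
    have := fam_hasDerivAt F h1 hrec (q - 1) (by omega) t
    rwa [e] at this
  have hB : HasDerivAt (fun x => F (q - 1) (x - 1))
      (F (q - 2) (t - 1) - F (q - 2) (t - 2)) t := by
    have h0 := fam_hasDerivAt F h1 hrec (q - 1) (by omega) (t - 1)
    rw [e] at h0
    have h2 := h0.comp t ((hasDerivAt_id t).sub_const 1)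
    have : (F (q - 1) ∘ fun x => id x - 1) = fun x => F (q - 1) (x - 1) := by
      funext x; simp [Function.comp]
    rw [this, mul_one] at h2
    have e2 : t - 1 - 1 = t - 2 := by ring
    rwa [e2] at h2
  exact (hA.sub hB).deriv

private lemma fam_vanish (F : ℕ → ℝ → ℝ) (h1z : ∀ t : ℝ, t ≤ 0 → F 1 t = 0)
    (hrec : ∀ q : ℕ, 2 ≤ q → ∀ t : ℝ,
      F q t = ∫ s in (0:ℝ)..t, (F (q - 1) s - F (q - 1) (s - 1))) :
    ∀ q, 1 ≤ q → ∀ t : ℝ, t ≤ 0 → F q t = 0 := by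
  intro q hq
  induction q, hq using Nat.le_induction with
  | base => exact h1z
  | succ q hq ih =>
    intro t ht
    have he := hrec (q + 1) (by omega) t
    simp only [Nat.add_sub_cancel] at he
    rw [he]
    have : Set.EqOn (fun s => F q s - F q (s - 1)) 0 (Set.uIcc 0 t) := by
      intro s hs
      rw [Set.uIcc_of_ge ht] at hs
      have hs0 : s ≤ 0 := hs.2
      simp [ih s hs0, ih (s - 1) (by linarith)]
    rw [intervalIntegral.integral_congr this]
    simp


private lemma fam_err (F G : ℕ → ℝ → ℝ)
    (hFc : ∀ q, 1 ≤ q → Continuous (F q)) (hGc : ∀ q, 1 ≤ q → Continuous (G q))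
    (hF0 : ∀ q, 1 ≤ q → ∀ t : ℝ, t ≤ 0 → F q t = 0)
    (hG0 : ∀ q, 1 ≤ q → ∀ t : ℝ, t ≤ 0 → G q t = 0)
    (hrecF : ∀ q : ℕ, 2 ≤ q → ∀ t : ℝ,
      F q t = ∫ s in (0:ℝ)..t, (F (q - 1) s - F (q - 1) (s - 1)))
    (hrecG : ∀ q : ℕ, 2 ≤ q → ∀ t : ℝ,
      G q t = ∫ s in (0:ℝ)..t, (G (q - 1) s - G (q - 1) (s - 1)))
    (ε M : ℝ) (hε : 0 ≤ ε) (hM : 1 ≤ M)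
    (hbase : ∀ t : ℝ, |F 1 t - G 1 t| ≤ ε) :
    ∀ q, 1 ≤ q → ∀ t : ℝ, t ≤ M → |F q t - G q t| ≤ (2 * M) ^ (q - 1) * ε := by
  intro q hq
  induction q, hq using Nat.le_induction with
  | base => intro t _; simpa using hbase t
  | succ q hq ih =>
    intro t ht
    have hMpos : (0:ℝ) < 2 * M := by linarith
    have hpow : (0:ℝ) ≤ (2 * M) ^ (q - 1) * ε := by positivity
    by_cases h0 : t ≤ 0
    · rw [hF0 (q + 1) (by omega) t h0, hG0 (q + 1) (by omega) t h0]
      simpa using by positivity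
    push_neg at h0
    have heF := hrecF (q + 1) (by omega) t
    have heG := hrecG (q + 1) (by omega) t
    simp only [Nat.add_sub_cancel] at heF heG
    have hcF : Continuous (fun s => F q s - F q (s - 1)) := by
      have := hFc q hq; exact this.sub (this.comp (continuous_id.sub continuous_const))
    have hcG : Continuous (fun s => G q s - G q (s - 1)) := by
      have := hGc q hq; exact this.sub (this.comp (continuous_id.sub continuous_const))
    rw [heF, heG, ← intervalIntegral.integral_sub (hcF.intervalIntegrable _ _)
      (hcG.intervalIntegrable _ _)]
    have hbd : ∀ s ∈ Set.uIoc (0:ℝ) t,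
        ‖(F q s - F q (s - 1)) - (G q s - G q (s - 1))‖ ≤ 2 * ((2 * M) ^ (q - 1) * ε) := by
      intro s hs
      rw [Set.uIoc_of_le h0.le] at hs
      have h1 := ih s (le_trans hs.2 ht)
      have h2 := ih (s - 1) (by linarith [hs.2, ht])
      rw [Real.norm_eq_abs]
      calc |(F q s - F q (s - 1)) - (G q s - G q (s - 1))|
          = |(F q s - G q s) - (F q (s - 1) - G q (s - 1))| := by ring_nf
        _ ≤ |F q s - G q s| + |F q (s - 1) - G q (s - 1)| := abs_sub _ _
        _ ≤ 2 * ((2 * M) ^ (q - 1) * ε) := by linarith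
    have := intervalIntegral.norm_integral_le_of_norm_le_const hbd
    rw [Real.norm_eq_abs] at this
    calc |∫ s in (0:ℝ)..t, ((F q s - F q (s - 1)) - (G q s - G q (s - 1)))|
        ≤ 2 * ((2 * M) ^ (q - 1) * ε) * |t - 0| := this
      _ ≤ 2 * ((2 * M) ^ (q - 1) * ε) * M := by
          apply mul_le_mul_of_nonneg_left _ (by positivity)
          rw [sub_zero, abs_of_pos h0]; exact ht
      _ = (2 * M) ^ (q + 1 - 1) * ε := by
          have e : q + 1 - 1 = (q - 1) + 1 := by omega
          rw [e, pow_succ]; ring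


private lemma est_denom {μ : ℝ} (hμ0 : 0 < μ) (hμ1 : μ ≤ 1) :
    μ ^ 4 * (86 / 96) ≤ μ ^ 2 * (2 * (1 - Real.cos μ)) ∧ 0 < 2 * (1 - Real.cos μ) := by
  have hcb := Real.cos_bound (x := μ) (by rw [abs_of_pos hμ0]; exact hμ1)
  rw [show |μ| = μ from abs_of_pos hμ0] at hcb
  have h1 := abs_le.1 hcb
  have hμ2 : 0 < μ ^ 2 := by positivity
  have hμ21 : μ ^ 2 ≤ 1 := by nlinarith
  have hμ42 : μ ^ 4 ≤ μ ^ 2 := by nlinarith [mul_le_mul_of_nonneg_left hμ21 (sq_nonneg μ)]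
  have hμ64 : μ ^ 6 ≤ μ ^ 4 := by
    nlinarith [mul_le_mul_of_nonneg_left hμ21 (pow_nonneg hμ0.le 4)]
  constructor
  · nlinarith [h1.2, hμ64]
  · nlinarith [h1.2, hμ42]

private lemma est1 {μ u : ℝ} (hμ0 : 0 < μ) (hμ1 : μ ≤ 1) (hu0 : 0 ≤ u) (hu1 : u ≤ 1) :
    |μ / (2 * (1 - Real.cos μ)) * Real.sin (μ * u) - u| ≤ μ ^ 2 := by
  obtain ⟨hden, hd⟩ := est_denom hμ0 hμ1
  have hcb := Real.cos_bound (x := μ) (by rw [abs_of_pos hμ0]; exact hμ1)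
  have hsb := Real.sin_bound (x := μ * u)
    (by rw [abs_of_nonneg (by positivity)]; nlinarith)
  rw [show |μ| = μ from abs_of_pos hμ0] at hcb
  rw [show |μ * u| = μ * u from abs_of_nonneg (by positivity)] at hsb
  set E1 := Real.sin (μ * u) - (μ * u - (μ * u) ^ 3 / 6) with hE1
  set E2 := Real.cos μ - (1 - μ ^ 2 / 2) with hE2
  have hsin : Real.sin (μ * u) = μ * u - (μ * u) ^ 3 / 6 + E1 := by rw [hE1]; ring
  have hcos : Real.cos μ = 1 - μ ^ 2 / 2 + E2 := by rw [hE2]; ring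
  have hu4 : u ^ 4 ≤ 1 := pow_le_one₀ hu0 hu1
  have hu3 : u ^ 3 ≤ 1 := pow_le_one₀ hu0 hu1
  have hb1 : |E1| ≤ μ ^ 4 * (5 / 96) := by
    refine le_trans hsb ?_
    have h : (μ * u) ^ 4 ≤ μ ^ 4 := by
      have : (μ * u) ^ 4 = μ ^ 4 * u ^ 4 := by ring
      rw [this]
      nlinarith [pow_pos hμ0 4]
    have h5 : (μ * u) ^ 5 ≤ (μ * u) ^ 4 := by
      have hmu : μ * u ≤ 1 := by nlinarith
      have h4 : 0 ≤ (μ * u) ^ 4 := by positivity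
      nlinarith [mul_le_mul_of_nonneg_left hmu h4]
    linarith [pow_pos hμ0 4]
  have hb2 : |E2| ≤ μ ^ 4 * (5 / 96) := hcb
  have key : μ / (2 * (1 - Real.cos μ)) * Real.sin (μ * u) - u =
      (μ * Real.sin (μ * u) - u * (2 * (1 - Real.cos μ))) / (2 * (1 - Real.cos μ)) := by
    have hd' : 1 - Real.cos μ ≠ 0 := by intro h; rw [h] at hd; norm_num at hd
    field_simp
  rw [key, abs_div, abs_of_pos hd, div_le_iff₀ hd]
  have hnum : μ * Real.sin (μ * u) - u * (2 * (1 - Real.cos μ)) =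
      -(μ ^ 4 * u ^ 3 / 6) + μ * E1 + 2 * u * E2 := by
    rw [hsin, hcos]; ring
  rw [hnum]
  have t0 : |(-(μ ^ 4 * u ^ 3 / 6))| ≤ μ ^ 4 / 6 := by
    rw [abs_neg, abs_of_nonneg (by positivity)]
    nlinarith [pow_pos hμ0 4]
  have t1 : |μ * E1| ≤ μ ^ 4 * (5 / 96) := by
    rw [abs_mul, abs_of_pos hμ0]
    nlinarith [abs_nonneg E1, mul_nonneg (by linarith : (0:ℝ) ≤ 1 - μ) (abs_nonneg E1)]
  have t2 : |2 * u * E2| ≤ μ ^ 4 * (10 / 96) := by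
    rw [abs_mul, abs_of_nonneg (by positivity)]
    nlinarith [abs_nonneg E2, mul_nonneg (by linarith : (0:ℝ) ≤ 1 - u) (abs_nonneg E2)]
  calc |(-(μ ^ 4 * u ^ 3 / 6) + μ * E1 + 2 * u * E2)|
      ≤ |(-(μ ^ 4 * u ^ 3 / 6) + μ * E1)| + |2 * u * E2| := abs_add_le _ _
    _ ≤ |(-(μ ^ 4 * u ^ 3 / 6))| + |μ * E1| + |2 * u * E2| := by
        linarith [abs_add_le (-(μ ^ 4 * u ^ 3 / 6)) (μ * E1)]
    _ ≤ μ ^ 4 * (86 / 96) := by linarith [pow_pos hμ0 4]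
    _ ≤ μ ^ 2 * (2 * (1 - Real.cos μ)) := hden

private lemma est2 {μ : ℝ} (hμ0 : 0 < μ) (hμ1 : μ ≤ 1) :
    |μ / (2 * (1 - Real.cos μ)) * (μ * Real.cos (μ / 2)) - 1| ≤ μ ^ 2 := by
  obtain ⟨hden, hd⟩ := est_denom hμ0 hμ1
  have hcb := Real.cos_bound (x := μ) (by rw [abs_of_pos hμ0]; exact hμ1)
  have hcb2 := Real.cos_bound (x := μ / 2) (by rw [abs_of_pos (by linarith)]; linarith)
  rw [show |μ| = μ from abs_of_pos hμ0] at hcb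
  rw [show |μ / 2| = μ / 2 from abs_of_pos (by linarith)] at hcb2
  set E2 := Real.cos μ - (1 - μ ^ 2 / 2) with hE2
  set E3 := Real.cos (μ / 2) - (1 - (μ / 2) ^ 2 / 2) with hE3
  have hcos : Real.cos μ = 1 - μ ^ 2 / 2 + E2 := by rw [hE2]; ring
  have hcos2 : Real.cos (μ / 2) = 1 - μ ^ 2 / 8 + E3 := by rw [hE3]; ring
  have hb2 : |E2| ≤ μ ^ 4 * (5 / 96) := hcb
  have hb3 : |E3| ≤ μ ^ 4 * (5 / 96) := by
    refine le_trans hcb2 ?_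
    nlinarith [pow_pos hμ0 4]
  have key : μ / (2 * (1 - Real.cos μ)) * (μ * Real.cos (μ / 2)) - 1 =
      (μ * (μ * Real.cos (μ / 2)) - 1 * (2 * (1 - Real.cos μ))) / (2 * (1 - Real.cos μ)) := by
    have hd' : 1 - Real.cos μ ≠ 0 := by intro h; rw [h] at hd; norm_num at hd
    field_simp
  rw [key, abs_div, abs_of_pos hd, div_le_iff₀ hd]
  have hnum : μ * (μ * Real.cos (μ / 2)) - 1 * (2 * (1 - Real.cos μ)) =
      -(μ ^ 4 / 8) + μ ^ 2 * E3 + 2 * E2 := by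
    rw [hcos, hcos2]; ring
  rw [hnum]
  have t1 : |μ ^ 2 * E3| ≤ μ ^ 4 * (5 / 96) := by
    rw [abs_mul, abs_of_nonneg (by positivity)]
    nlinarith [abs_nonneg E3, mul_nonneg (by nlinarith [sq_nonneg μ] : (0:ℝ) ≤ 1 - μ ^ 2) (abs_nonneg E3)]
  have t2 : |2 * E2| ≤ μ ^ 4 * (10 / 96) := by
    rw [abs_mul]; rw [show |(2:ℝ)| = 2 by norm_num]; linarith
  calc |(-(μ ^ 4 / 8) + μ ^ 2 * E3 + 2 * E2)|
      ≤ |(-(μ ^ 4 / 8) + μ ^ 2 * E3)| + |2 * E2| := abs_add_le _ _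
    _ ≤ |(-(μ ^ 4 / 8))| + |μ ^ 2 * E3| + |2 * E2| := by
        linarith [abs_add_le (-(μ ^ 4 / 8)) (μ ^ 2 * E3)]
    _ ≤ μ ^ 4 / 8 + μ ^ 4 * (5 / 96) + μ ^ 4 * (10 / 96) := by
        rw [abs_neg, abs_of_nonneg (by positivity)]; linarith
    _ ≤ μ ^ 4 * (86 / 96) := by nlinarith [pow_pos hμ0 4]
    _ ≤ μ ^ 2 * (2 * (1 - Real.cos μ)) := hden


private lemma hasDerivAt_c_sin (c μ x : ℝ) :
    HasDerivAt (fun t => c * Real.sin (μ * t)) (c * μ * Real.cos (μ * x)) x := by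
  have h := ((Real.hasDerivAt_sin (μ * x)).comp x ((hasDerivAt_id x).const_mul μ)).const_mul c
  have he : (Real.sin ∘ fun y => μ * y) = fun t => Real.sin (μ * t) := by
    funext y; simp [Function.comp]
  rw [he] at h
  exact h.congr_deriv (by ring)

private lemma hasDerivAt_c_sin_rev (c μ x : ℝ) :
    HasDerivAt (fun t => c * Real.sin (μ * (2 - t))) (-(c * μ * Real.cos (μ * (2 - x)))) x := by
  have hin : HasDerivAt (fun t : ℝ => μ * (2 - t)) (μ * (-1)) x := by
    exact ((hasDerivAt_id x).const_sub 2).const_mul μ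
  have h := ((Real.hasDerivAt_sin (μ * (2 - x))).comp x hin).const_mul c
  have he : (Real.sin ∘ fun y : ℝ => μ * (2 - y)) = fun t => Real.sin (μ * (2 - t)) := by
    funext y; simp [Function.comp]
  rw [he] at h
  exact h.congr_deriv (by ring)

private lemma hasDerivAt_shift {f : ℝ → ℝ} {v x : ℝ} (h : HasDerivAt f v (x - 1)) :
    HasDerivAt (fun t => f (t - 1)) v x := by
  have h2 := h.comp x ((hasDerivAt_id x).sub_const 1)
  have he : (f ∘ fun t : ℝ => id t - 1) = fun t => f (t - 1) := by
    funext y; simp [Function.comp]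
  rw [he, mul_one] at h2
  exact h2


private lemma if_tent (c μ t : ℝ) :
    (if 0 ≤ t ∧ t < 1 then c * Real.sin (μ * t)
     else if 1 ≤ t ∧ t < 2 then c * Real.sin (μ * (2 - t)) else 0)
    = c * Real.sin (μ * max (1 - |t - 1|) 0) := by
  split_ifs with h1 h2
  · have e : 1 - |t - 1| = t := by rw [abs_of_nonpos (by linarith [h1.2])]; ring
    rw [e, max_eq_left h1.1]
  · have e : 1 - |t - 1| = 2 - t := by rw [abs_of_nonneg (by linarith [h2.1])]; ring
    rw [e, max_eq_left (by linarith [h2.2])]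
  · push_neg at h1 h2
    have hm : max (1 - |t - 1|) 0 = 0 := by
      apply max_eq_right
      rcases le_or_gt 0 t with h | h
      · have h1' := h1 h
        have h2' := h2 h1'
        rw [abs_of_nonneg (by linarith)]; linarith
      · rw [abs_of_nonpos (by linarith)]; linarith
    rw [hm, mul_zero, Real.sin_zero, mul_zero]

private lemma if_tent' (t : ℝ) :
    (if 0 ≤ t ∧ t < 1 then t else if 1 ≤ t ∧ t < 2 then 2 - t else 0)
    = max (1 - |t - 1|) 0 := by
  split_ifs with h1 h2
  · have e : 1 - |t - 1| = t := by rw [abs_of_nonpos (by linarith [h1.2])]; ring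
    rw [e, max_eq_left h1.1]
  · have e : 1 - |t - 1| = 2 - t := by rw [abs_of_nonneg (by linarith [h2.1])]; ring
    rw [e, max_eq_left (by linarith [h2.2])]
  · push_neg at h1 h2
    symm
    apply max_eq_right
    rcases le_or_gt 0 t with h | h
    · have h1' := h1 h
      have h2' := h2 h1'
      rw [abs_of_nonneg (by linarith)]; linarith
    · rw [abs_of_nonpos (by linarith)]; linarith

private lemma tent_cont : Continuous (fun t : ℝ => max (1 - |t - 1|) 0) := by
  apply Continuous.max _ continuous_const
  exact continuous_const.sub (continuous_id.sub continuous_const).abs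

private lemma tent_zero {t : ℝ} (ht : t ≤ 0) : max (1 - |t - 1|) 0 = 0 := by
  apply max_eq_right
  rw [abs_of_nonpos (by linarith)]; linarith

private lemma tent_mem (t : ℝ) : 0 ≤ max (1 - |t - 1|) 0 ∧ max (1 - |t - 1|) 0 ≤ 1 := by
  refine ⟨le_max_right _ _, max_le (by linarith [abs_nonneg (t - 1)]) (by norm_num)⟩

noncomputable def fSym (φ : ℕ → ℝ → ℝ) (p : ℕ) (θ : ℝ) : ℝ :=
  -(deriv (deriv (φ p)) (((p : ℝ) + 1) / 2)) -
    2 * ∑ k ∈ Finset.Icc 1 (p / 2),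
      deriv (deriv (φ p)) (((p : ℝ) + 1) / 2 - (k : ℝ)) * Real.cos ((k : ℝ) * θ)

theorem fSym_trig_L1_convergence (α : ℝ) (hα : 0 < α) (p : ℕ) (hp : 2 ≤ p)
    (Φ : ℝ → ℕ → ℝ → ℝ)
    (hΦ1 : ∀ μ : ℝ, 0 < μ → μ < Real.pi → ∀ t : ℝ, Φ μ 1 t =
      if 0 ≤ t ∧ t < 1 then μ / (2 * (1 - Real.cos μ)) * Real.sin (μ * t)
      else if 1 ≤ t ∧ t < 2 then μ / (2 * (1 - Real.cos μ)) * Real.sin (μ * (2 - t))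
      else 0)
    (hΦrec : ∀ μ : ℝ, 0 < μ → μ < Real.pi → ∀ q : ℕ, 2 ≤ q → ∀ t : ℝ,
      Φ μ q t = ∫ s in (0:ℝ)..t, (Φ μ (q - 1) s - Φ μ (q - 1) (s - 1)))
    (ψ : ℕ → ℝ → ℝ)
    (hψ1 : ∀ t : ℝ, ψ 1 t =
      if 0 ≤ t ∧ t < 1 then t
      else if 1 ≤ t ∧ t < 2 then 2 - t
      else 0)
    (hψrec : ∀ q : ℕ, 2 ≤ q → ∀ t : ℝ,
      ψ q t = ∫ s in (0:ℝ)..t, (ψ (q - 1) s - ψ (q - 1) (s - 1))) :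
    ∃ C : ℝ, 0 < C ∧ ∃ N : ℕ, 1 ≤ N ∧ (∀ n : ℕ, N ≤ n → α / (n : ℝ) < Real.pi) ∧
      ∀ n : ℕ, N ≤ n →
        (∫ θ in (-Real.pi)..Real.pi, |fSym (Φ (α / n)) p θ - fSym ψ p θ|) ≤ C / (n : ℝ) ^ 2 := by
  classical
  have hp1 : (1:ℝ) ≤ (p:ℝ) := by exact_mod_cast (by omega : 1 ≤ p)
  have h2p : (0:ℝ) < 2 * (p:ℝ) := by linarith
  refine ⟨(1 + (p:ℝ)) * (4 * (2 * (p:ℝ)) ^ p) * α ^ 2 * (2 * Real.pi), ?_, Nat.ceil α + 1,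
    le_add_self, ?_, ?_⟩
  · exact mul_pos (mul_pos (mul_pos (by linarith) (mul_pos four_pos (pow_pos h2p p)))
      (by positivity)) (by positivity)
  · intro n hn
    have hnα : α + 1 ≤ (n:ℝ) := by
      have h1 : (Nat.ceil α + 1 : ℕ) ≤ n := hn
      have h2 : ((Nat.ceil α + 1 : ℕ) : ℝ) ≤ (n:ℝ) := by exact_mod_cast h1
      push_cast at h2
      linarith [Nat.le_ceil α]
    have hnpos : (0:ℝ) < n := by linarith
    calc α / (n:ℝ) ≤ 1 := by rw [div_le_one hnpos]; linarith
      _ < Real.pi := by linarith [Real.pi_gt_three]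
  intro n hn
  have hnα : α + 1 ≤ (n:ℝ) := by
    have h1 : (Nat.ceil α + 1 : ℕ) ≤ n := hn
    have h2 : ((Nat.ceil α + 1 : ℕ) : ℝ) ≤ (n:ℝ) := by exact_mod_cast h1
    push_cast at h2
    linarith [Nat.le_ceil α]
  have hnpos : (0:ℝ) < n := by linarith
  set μ := α / (n:ℝ) with hμdef
  have hμ0 : 0 < μ := div_pos hα hnpos
  have hμ1 : μ ≤ 1 := by rw [hμdef, div_le_one hnpos]; linarith
  have hμπ : μ < Real.pi := lt_of_le_of_lt hμ1 (by linarith [Real.pi_gt_three])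
  have hrecF := hΦrec μ hμ0 hμπ
  have hF1eq : Φ μ 1 = fun t => μ / (2 * (1 - Real.cos μ)) *
      Real.sin (μ * max (1 - |t - 1|) 0) := by
    funext t; rw [hΦ1 μ hμ0 hμπ t]; exact if_tent _ μ t
  have hG1eq : ψ 1 = fun t => max (1 - |t - 1|) 0 := by
    funext t; rw [hψ1 t]; exact if_tent' t
  have hF1cont : Continuous (Φ μ 1) := by
    rw [hF1eq]
    exact continuous_const.mul (Real.continuous_sin.comp (continuous_const.mul tent_cont))
  have hG1cont : Continuous (ψ 1) := by rw [hG1eq]; exact tent_cont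
  have hF10 : ∀ t : ℝ, t ≤ 0 → Φ μ 1 t = 0 := by
    intro t ht; rw [hF1eq]; simp [tent_zero ht]
  have hG10 : ∀ t : ℝ, t ≤ 0 → ψ 1 t = 0 := by
    intro t ht; rw [hG1eq]; simp [tent_zero ht]
  have hFc := fam_cont (Φ μ) hF1cont hrecF
  have hGc := fam_cont ψ hG1cont hψrec
  have hF0 := fam_vanish (Φ μ) hF10 hrecF
  have hG0 := fam_vanish ψ hG10 hψrec
  have hbase : ∀ t : ℝ, |Φ μ 1 t - ψ 1 t| ≤ μ ^ 2 := by
    intro t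
    rw [hF1eq, hG1eq]
    obtain ⟨hu0, hu1⟩ := tent_mem t
    simpa using est1 hμ0 hμ1 hu0 hu1
  have herr := fam_err (Φ μ) ψ hFc hGc hF0 hG0 hrecF hψrec (μ^2) (p:ℝ)
    (by positivity) hp1 hbase
  set B : ℝ := 4 * (2*(p:ℝ))^p * μ^2 with hBdef
  have hB0 : 0 ≤ B := by rw [hBdef]; positivity
  -- second derivative difference bound at the sample points
  have hΔ : ∀ k : ℕ, k ≤ p/2 →
      |deriv (deriv (Φ μ p)) (((p:ℝ)+1)/2 - (k:ℝ)) -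
        deriv (deriv (ψ p)) (((p:ℝ)+1)/2 - (k:ℝ))| ≤ B := by
    intro k hk
    rcases eq_or_lt_of_le hp with hp2 | hp3
    · -- p = 2
      subst hp2
      set c := μ / (2 * (1 - Real.cos μ)) with hcdef
      set X := c * μ * Real.cos (μ * (1/2)) with hXdef
      have hX1 : |X - 1| ≤ μ^2 := by
        rw [hXdef, show μ * (1/2:ℝ) = μ/2 by ring, mul_assoc, hcdef]
        exact est2 hμ0 hμ1
      have hevΦhalf : HasDerivAt (Φ μ 1) X (1/2) := by
        have hev : Φ μ 1 =ᶠ[nhds (1/2:ℝ)] fun t => c * Real.sin (μ * t) := by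
          filter_upwards [Ioo_mem_nhds (by norm_num : (0:ℝ) < 1/2)
            (by norm_num : (1/2:ℝ) < 1)] with t ht
          rw [hΦ1 μ hμ0 hμπ t, if_pos ⟨ht.1.le, ht.2⟩]
        exact hev.hasDerivAt_iff.mpr (by rw [hXdef]; exact hasDerivAt_c_sin c μ (1/2))
      have hevΦ3half : HasDerivAt (Φ μ 1) (-X) (3/2) := by
        have hev : Φ μ 1 =ᶠ[nhds (3/2:ℝ)] fun t => c * Real.sin (μ * (2 - t)) := by
          filter_upwards [Ioo_mem_nhds (by norm_num : (1:ℝ) < 3/2)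
            (by norm_num : (3/2:ℝ) < 2)] with t ht
          rw [hΦ1 μ hμ0 hμπ t, if_neg (by rintro ⟨_, h⟩; linarith [ht.1]),
            if_pos ⟨ht.1.le, ht.2⟩]
        refine hev.hasDerivAt_iff.mpr ?_
        have h := hasDerivAt_c_sin_rev c μ (3/2)
        rw [show (2:ℝ) - 3/2 = 1/2 by norm_num] at h
        rw [hXdef]
        exact h
      have hevΦneg : HasDerivAt (Φ μ 1) 0 ((1/2:ℝ) - 1) := by
        have hev : Φ μ 1 =ᶠ[nhds ((1/2:ℝ) - 1)] fun _ => (0:ℝ) := by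
          filter_upwards [Iio_mem_nhds (by norm_num : (1/2:ℝ) - 1 < 0)] with t ht
          have ht' : t < 0 := ht
          rw [hΦ1 μ hμ0 hμπ t, if_neg (by rintro ⟨h, _⟩; linarith),
            if_neg (by rintro ⟨h, _⟩; linarith)]
        exact hev.hasDerivAt_iff.mpr (hasDerivAt_const _ 0)
      have hevψhalf : HasDerivAt (ψ 1) 1 (1/2) := by
        have hev : ψ 1 =ᶠ[nhds (1/2:ℝ)] fun t => t := by
          filter_upwards [Ioo_mem_nhds (by norm_num : (0:ℝ) < 1/2)
            (by norm_num : (1/2:ℝ) < 1)] with t ht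
          rw [hψ1 t, if_pos ⟨ht.1.le, ht.2⟩]
        exact hev.hasDerivAt_iff.mpr (hasDerivAt_id' (1/2:ℝ))
      have hevψ3half : HasDerivAt (ψ 1) (-1) (3/2) := by
        have hev : ψ 1 =ᶠ[nhds (3/2:ℝ)] fun t => 2 - t := by
          filter_upwards [Ioo_mem_nhds (by norm_num : (1:ℝ) < 3/2)
            (by norm_num : (3/2:ℝ) < 2)] with t ht
          rw [hψ1 t, if_neg (by rintro ⟨_, h⟩; linarith [ht.1]), if_pos ⟨ht.1.le, ht.2⟩]
        refine hev.hasDerivAt_iff.mpr ?_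
        simpa using (hasDerivAt_id (3/2:ℝ)).const_sub 2
      have hevψneg : HasDerivAt (ψ 1) 0 ((1/2:ℝ) - 1) := by
        have hev : ψ 1 =ᶠ[nhds ((1/2:ℝ) - 1)] fun _ => (0:ℝ) := by
          filter_upwards [Iio_mem_nhds (by norm_num : (1/2:ℝ) - 1 < 0)] with t ht
          have ht' : t < 0 := ht
          rw [hψ1 t, if_neg (by rintro ⟨h, _⟩; linarith),
            if_neg (by rintro ⟨h, _⟩; linarith)]
        exact hev.hasDerivAt_iff.mpr (hasDerivAt_const _ 0)
      have hd1F : deriv (Φ μ 2) = fun x => Φ μ 1 x - Φ μ 1 (x - 1) := by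
        funext x
        simpa using (fam_hasDerivAt (Φ μ) hF1cont hrecF 2 le_rfl x).deriv
      have hd1G : deriv (ψ 2) = fun x => ψ 1 x - ψ 1 (x - 1) := by
        funext x
        simpa using (fam_hasDerivAt ψ hG1cont hψrec 2 le_rfl x).deriv
      have hB64 : 2 * μ^2 ≤ B := by
        rw [hBdef]
        have : (2*((2:ℕ):ℝ))^(2:ℕ) = 16 := by norm_num
        rw [this]
        nlinarith [sq_nonneg μ]
      norm_num at hk
      interval_cases k
      · -- k = 0, point 3/2
        have hpt : (((2:ℕ):ℝ)+1)/2 - ((0:ℕ):ℝ) = 3/2 := by norm_num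
        rw [hpt]
        have hDF : deriv (deriv (Φ μ 2)) (3/2) = -X - X := by
          rw [hd1F]
          exact (hevΦ3half.sub (hasDerivAt_shift
            (by rw [show (3/2:ℝ) - 1 = 1/2 by norm_num]; exact hevΦhalf))).deriv
        have hDG : deriv (deriv (ψ 2)) (3/2) = -1 - 1 := by
          rw [hd1G]
          exact (hevψ3half.sub (hasDerivAt_shift
            (by rw [show (3/2:ℝ) - 1 = 1/2 by norm_num]; exact hevψhalf))).deriv
        rw [hDF, hDG]
        calc |(-X - X) - (-1 - 1 : ℝ)|
            = 2 * |X - 1| := by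
              rw [show (-X - X) - (-1 - 1 : ℝ) = (-2) * (X - 1) by ring, abs_mul]
              norm_num
          _ ≤ 2 * μ^2 := by linarith
          _ ≤ B := hB64
      · -- k = 1, point 1/2
        have hpt : (((2:ℕ):ℝ)+1)/2 - ((1:ℕ):ℝ) = 1/2 := by norm_num
        rw [hpt]
        have hDF : deriv (deriv (Φ μ 2)) (1/2) = X - 0 := by
          rw [hd1F]
          exact (hevΦhalf.sub (hasDerivAt_shift hevΦneg)).deriv
        have hDG : deriv (deriv (ψ 2)) (1/2) = 1 - 0 := by
          rw [hd1G]
          exact (hevψhalf.sub (hasDerivAt_shift hevψneg)).deriv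
        rw [hDF, hDG]
        calc |(X - 0) - (1 - 0 : ℝ)| = |X - 1| := by norm_num
          _ ≤ μ^2 := hX1
          _ ≤ B := by linarith [hB64, sq_nonneg μ]
    · -- 3 ≤ p
      have hp3 : 3 ≤ p := hp3
      set t : ℝ := ((p:ℝ)+1)/2 - (k:ℝ) with htdef
      have hk0 : (0:ℝ) ≤ (k:ℝ) := Nat.cast_nonneg k
      have ht : t ≤ (p:ℝ) := by rw [htdef]; linarith
      have hd2F := fam_deriv2 (Φ μ) hF1cont hrecF p (by omega) t
      have hd2G := fam_deriv2 ψ hG1cont hψrec p (by omega) t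
      rw [hd2F, hd2G]
      have e1 := abs_le.1 (herr (p-2) (by omega) t ht)
      have e2 := abs_le.1 (herr (p-2) (by omega) (t-1) (by linarith))
      have e3 := abs_le.1 (herr (p-2) (by omega) (t-2) (by linarith))
      have hexp : (2*(p:ℝ))^(p-2-1) * μ^2 ≤ (2*(p:ℝ))^p * μ^2 := by
        apply mul_le_mul_of_nonneg_right _ (by positivity)
        exact pow_le_pow_right₀ (by linarith) (by omega)
      rw [abs_le]
      constructor <;> [skip; skip] <;>
        · simp only [hBdef]
          linarith [e1.1, e1.2, e2.1, e2.2, e3.1, e3.2, hexp]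
  have hΔ0 : |deriv (deriv (Φ μ p)) (((p:ℝ)+1)/2) -
      deriv (deriv (ψ p)) (((p:ℝ)+1)/2)| ≤ B := by
    simpa using hΔ 0 (Nat.zero_le _)
  have hpt : ∀ θ : ℝ, |fSym (Φ μ) p θ - fSym ψ p θ| ≤ (1 + (p:ℝ)) * B := by
    intro θ
    simp only [fSym]
    set dF := deriv (deriv (Φ μ p)) with hdF
    set dG := deriv (deriv (ψ p)) with hdG
    set SΦ := ∑ k ∈ Finset.Icc 1 (p/2), dF (((p:ℝ)+1)/2 - (k:ℝ)) * Real.cos ((k:ℝ)*θ) with hSΦ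
    set Sψ := ∑ k ∈ Finset.Icc 1 (p/2), dG (((p:ℝ)+1)/2 - (k:ℝ)) * Real.cos ((k:ℝ)*θ) with hSψ
    have hsplit : (-(dF (((p:ℝ)+1)/2)) - 2*SΦ) - (-(dG (((p:ℝ)+1)/2)) - 2*Sψ)
        = -((dF (((p:ℝ)+1)/2) - dG (((p:ℝ)+1)/2))) - 2*(SΦ - Sψ) := by ring
    rw [hsplit]
    have hS : |SΦ - Sψ| ≤ ((p/2 : ℕ) : ℝ) * B := by
      rw [hSΦ, hSψ, ← Finset.sum_sub_distrib]
      have hterm : ∀ k ∈ Finset.Icc 1 (p/2),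
          |dF (((p:ℝ)+1)/2 - (k:ℝ)) * Real.cos ((k:ℝ)*θ) -
            dG (((p:ℝ)+1)/2 - (k:ℝ)) * Real.cos ((k:ℝ)*θ)| ≤ B := by
        intro k hk
        have hk' : k ≤ p/2 := (Finset.mem_Icc.1 hk).2
        have hd := hΔ k hk'
        calc |dF (((p:ℝ)+1)/2 - (k:ℝ)) * Real.cos ((k:ℝ)*θ) -
            dG (((p:ℝ)+1)/2 - (k:ℝ)) * Real.cos ((k:ℝ)*θ)|
            = |dF (((p:ℝ)+1)/2 - (k:ℝ)) - dG (((p:ℝ)+1)/2 - (k:ℝ))| * |Real.cos ((k:ℝ)*θ)| := by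
              rw [← sub_mul, abs_mul]
          _ ≤ B * 1 := mul_le_mul hd (Real.abs_cos_le_one _) (abs_nonneg _) hB0
          _ = B := mul_one B
      calc |∑ k ∈ Finset.Icc 1 (p/2), (dF (((p:ℝ)+1)/2 - (k:ℝ)) * Real.cos ((k:ℝ)*θ) -
            dG (((p:ℝ)+1)/2 - (k:ℝ)) * Real.cos ((k:ℝ)*θ))|
          ≤ ∑ k ∈ Finset.Icc 1 (p/2), |dF (((p:ℝ)+1)/2 - (k:ℝ)) * Real.cos ((k:ℝ)*θ) -
            dG (((p:ℝ)+1)/2 - (k:ℝ)) * Real.cos ((k:ℝ)*θ)| := Finset.abs_sum_le_sum_abs _ _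
        _ ≤ ∑ _k ∈ Finset.Icc 1 (p/2), B := Finset.sum_le_sum hterm
        _ = ((p/2 : ℕ) : ℝ) * B := by
            rw [Finset.sum_const, Nat.card_Icc, nsmul_eq_mul]
            norm_num
    have hhalf : 2 * ((p/2 : ℕ):ℝ) ≤ (p:ℝ) := by
      have h := Nat.div_mul_le_self p 2
      have h2 : (((p/2) * 2 : ℕ) : ℝ) ≤ (p:ℝ) := by exact_mod_cast h
      push_cast at h2
      linarith
    calc |(-((dF (((p:ℝ)+1)/2) - dG (((p:ℝ)+1)/2))) - 2*(SΦ - Sψ))|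
        ≤ |(-((dF (((p:ℝ)+1)/2) - dG (((p:ℝ)+1)/2))))| + |2*(SΦ - Sψ)| := abs_sub _ _
      _ = |dF (((p:ℝ)+1)/2) - dG (((p:ℝ)+1)/2)| + 2*|SΦ - Sψ| := by
          rw [abs_neg, abs_mul]; norm_num
      _ ≤ B + 2*(((p/2 : ℕ):ℝ) * B) := by linarith [hΔ0, hS]
      _ ≤ (1 + (p:ℝ)) * B := by nlinarith [hB0, hhalf]
  have hintb := intervalIntegral.norm_integral_le_of_norm_le_const
    (a := -Real.pi) (b := Real.pi) (C := (1+(p:ℝ))*B)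
    (f := fun θ => |fSym (Φ μ) p θ - fSym ψ p θ|)
    (fun θ _ => by rw [Real.norm_eq_abs, abs_abs]; exact hpt θ)
  have h2π : |Real.pi - (-Real.pi)| = 2*Real.pi := by
    rw [sub_neg_eq_add, abs_of_pos (by positivity)]; ring
  rw [Real.norm_eq_abs, h2π] at hintb
  have hle : (∫ θ in (-Real.pi)..Real.pi, |fSym (Φ μ) p θ - fSym ψ p θ|)
      ≤ (1+(p:ℝ))*B * (2*Real.pi) := le_trans (le_abs_self _) hintb
  refine le_trans hle (le_of_eq ?_)
  rw [hBdef, hμdef]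
  have hne : (n:ℝ) ≠ 0 := ne_of_gt hnpos
  field_simp
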